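/- arXiv:2111.04556 — 5 statements merged into one kernel-verified Lean document; each statement's English description precedes it below -/
import Mathlib

section
/- Let M be a homogeneous NFA (all transitions into a state share the same label). Define the bit-parallel simulation: D₀ = {q₀}, and D_{i+1} = T(D_i) ∩ B(w_{i+1}) for an input word w = w₁…w_n, where T(X) is the set of states reachable in one step from X by any symbol and B(c) is the set of states that are targets of transitions labeled c. Then for every i, D_i equals the set of states reachable from q₀ by reading the prefix w₁…w_i; consequently M accepts w iff D_n ∩ F ≠ ∅. -/
/-- Correctness of the bit-parallel forward simulation
`D₀ = {q₀}`, `D_{i+1} = T(D_i) ∩ B(w_{i+1})` of a homogeneous NFA: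
the simulated set equals the set of states reachable on each prefix, and the
automaton accepts `w` iff the final simulated set meets `F`. -/
theorem bit_parallel_forward_simulation {Q A : Type*}
    (Δ : Set (Q × A × Q)) (q0 : Q) (F : Set Q)
    (homog : ∀ q a q' p b, (q, a, q') ∈ Δ → (p, b, q') ∈ Δ → a = b)
    (T : Set Q → Set Q) (B : A → Set Q)
    (hT : ∀ X, T X = {q' | ∃ q ∈ X, ∃ a, (q, a, q') ∈ Δ})
    (hB : ∀ c, B c = {q' | ∃ q, (q, c, q') ∈ Δ}) (w : List A) :
    (∀ u v : List A, w = u ++ v →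
      u.foldl (fun D c => T D ∩ B c) {q0} =
        u.foldl (fun D c => {q' | ∃ q ∈ D, (q, c, q') ∈ Δ}) {q0}) ∧
    ((w.foldl (fun D c => T D ∩ B c) {q0} ∩ F).Nonempty ↔
      (w.foldl (fun D c => {q' | ∃ q ∈ D, (q, c, q') ∈ Δ}) {q0} ∩ F).Nonempty) := by
  have hfun : (fun D c => T D ∩ B c) =
      (fun (D : Set Q) (c : A) => {q' | ∃ q ∈ D, (q, c, q') ∈ Δ}) := by
    funext D c
    ext q'
    simp only [hT, hB, Set.mem_inter_iff, Set.mem_setOf_eq]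
    constructor
    · rintro ⟨⟨q, hq, a, ha⟩, ⟨p, hp⟩⟩
      exact ⟨q, hq, (homog q a q' p c ha hp) ▸ ha⟩
    · rintro ⟨q, hq, h⟩
      exact ⟨⟨q, hq, c, h⟩, ⟨q, h⟩⟩
  rw [hfun]
  exact ⟨fun _ _ _ => rfl, Iff.rfl⟩
end

section
/- Let M be a homogeneous NFA and define the reverse simulation: D₀ = F, and for an input word w = w₁…w_n processed right to left, D_{i+1} = T'(D_i ∩ B(w_{n-i})), where T'(X) = { q | ∃ q' ∈ X, ∃ a, (q,a,q') ∈ Δ } and B(c) is the set of targets of c-labeled transitions. Then q₀ ∈ D_n if and only if M accepts w. -/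
/-- Correctness of the reverse bit-parallel simulation
`D₀ = F`, `D_{i+1} = T'(D_i ∩ B(w_{n-i}))` (processing `w` right to left) of a
homogeneous NFA: the initial state `q₀` belongs to the final simulated set iff
the NFA accepts `w`. -/
theorem bit_parallel_reverse_simulation {Q A : Type*}
    (Δ : Set (Q × A × Q)) (q0 : Q) (F : Set Q)
    (homog : ∀ q a q' p b, (q, a, q') ∈ Δ → (p, b, q') ∈ Δ → a = b)
    (T' : Set Q → Set Q) (B : A → Set Q)
    (hT' : ∀ X, T' X = {q | ∃ q' ∈ X, ∃ a, (q, a, q') ∈ Δ})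
    (hB : ∀ c, B c = {q' | ∃ q, (q, c, q') ∈ Δ}) (w : List A) :
    q0 ∈ w.reverse.foldl (fun D c => T' (D ∩ B c)) F ↔
      (w.foldl (fun D c => {q' | ∃ q ∈ D, (q, c, q') ∈ Δ}) {q0} ∩ F).Nonempty := by
  suffices h : ∀ (w : List A) (S : Set Q),
      (w.foldl (fun D c => {q' | ∃ q ∈ D, (q, c, q') ∈ Δ}) S ∩ F).Nonempty ↔
      (S ∩ w.reverse.foldl (fun D c => T' (D ∩ B c)) F).Nonempty by
    have := h w {q0}
    simp only [Set.singleton_inter_nonempty] at this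
    exact this.symm
  intro w
  induction w with
  | nil => intro S; simp [Set.inter_comm]
  | cons c w ih =>
    intro S
    rw [List.foldl_cons, List.reverse_cons, List.foldl_append, List.foldl_cons,
      List.foldl_nil, ih]
    set E := w.reverse.foldl (fun D c => T' (D ∩ B c)) F with hE
    constructor
    · rintro ⟨q', ⟨hq'f, hq'E⟩⟩
      obtain ⟨q, hqS, hqΔ⟩ := hq'f
      refine ⟨q, hqS, ?_⟩
      rw [hT']
      exact ⟨q', ⟨hq'E, by rw [hB]; exact ⟨q, hqΔ⟩⟩, c, hqΔ⟩
    · rintro ⟨q, hqS, hqT⟩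
      rw [hT'] at hqT
      obtain ⟨q', ⟨hq'E, hq'B⟩, a, haΔ⟩ := hqT
      rw [hB] at hq'B
      obtain ⟨p, hpΔ⟩ := hq'B
      have : a = c := homog q a q' p c haΔ hpΔ
      subst this
      exact ⟨q', ⟨q, hqS, haΔ⟩, hq'E⟩
end

section
/- With L, C and rank as above, the map LF(i) = C[L[i]] + rank_{L[i]}(L,i) is a bijection from [1..n] to [1..n], and it maps the positions of occurrences of symbol c, in left-to-right order, onto the contiguous interval [C[c]+1 .. C[c+1]]. -/
open Finset in
/-- the LF mapping `LF(i) = C[L[i]] + rank_{L[i]}(L,i)` is a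
bijection from positions `[1..n]` onto `[1..n]`, and it maps the positions of
the occurrences of each symbol `c`, in left-to-right order, onto the contiguous
interval `[C[c]+1 .. C[c+1]]`. -/
theorem LF_bijection_and_intervals {n σ : ℕ} (L : Fin n → Fin σ)
    (C : ℕ → ℕ) (hC : ∀ c, C c = (univ.filter (fun j => (L j : ℕ) < c)).card)
    (rank : Fin σ → Fin n → ℕ)
    (hrank : ∀ c i, rank c i = (univ.filter (fun j => j ≤ i ∧ L j = c)).card)
    (LF : Fin n → ℕ) (hLF : ∀ i, LF i = C (L i) + rank (L i) i) :
    Set.BijOn LF Set.univ (Set.Icc 1 n) ∧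
    (∀ c : Fin σ,
      Set.BijOn LF {i | L i = c} (Set.Icc (C c + 1) (C ((c : ℕ) + 1))) ∧
      ∀ i j : Fin n, L i = c → L j = c → i < j → LF i < LF j) := by
  -- C is monotone
  have hCmono : ∀ a b : ℕ, a ≤ b → C a ≤ C b := by
    intro a b hab
    rw [hC, hC]
    apply Finset.card_le_card
    intro j hj
    simp only [Finset.mem_filter, Finset.mem_univ, true_and] at *
    omega
  have hCn : ∀ a : ℕ, C a ≤ n := by
    intro a
    rw [hC]
    calc (univ.filter (fun j => (L j : ℕ) < a)).card ≤ (univ : Finset (Fin n)).card :=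
          Finset.card_le_card (Finset.filter_subset _ _)
      _ = n := by simp
  -- C (c+1) = C c + count of c
  have hCsucc : ∀ c : Fin σ,
      C ((c : ℕ) + 1) = C c + (univ.filter (fun j => L j = c)).card := by
    intro c
    rw [hC, hC]
    have hcongr : (univ.filter (fun j => (L j : ℕ) < (c : ℕ) + 1)) =
        (univ.filter (fun j => (L j : ℕ) < (c : ℕ) ∨ L j = c)) := by
      apply Finset.filter_congr
      intro j _
      simp only [Fin.ext_iff]
      constructor <;> (intro h; omega)
    rw [hcongr, Finset.filter_or]
    apply Finset.card_union_of_disjoint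
    rw [Finset.disjoint_left]
    intro j hj1 hj2
    simp only [Finset.mem_filter, Finset.mem_univ, true_and, Fin.ext_iff] at *
    omega
  -- rank bounds
  have hrank_pos : ∀ i : Fin n, 1 ≤ rank (L i) i := by
    intro i
    rw [hrank]
    rw [Nat.one_le_iff_ne_zero, ← Nat.pos_iff_ne_zero, Finset.card_pos]
    exact ⟨i, by simp⟩
  have hrank_le : ∀ (c : Fin σ) (i : Fin n),
      rank c i ≤ (univ.filter (fun j => L j = c)).card := by
    intro c i
    rw [hrank]
    apply Finset.card_le_card
    intro j hj
    simp only [Finset.mem_filter, Finset.mem_univ, true_and] at *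
    exact hj.2
  have hrank_lt : ∀ (c : Fin σ) (i j : Fin n), i < j → L j = c → rank c i < rank c j := by
    intro c i j hij hLj
    rw [hrank, hrank]
    apply Finset.card_lt_card
    constructor
    · intro k hk
      simp only [Finset.mem_filter, Finset.mem_univ, true_and] at *
      exact ⟨le_trans hk.1 (le_of_lt hij), hk.2⟩
    · intro hsub
      have := hsub (by simp [hLj] : j ∈ univ.filter (fun k => k ≤ j ∧ L k = c))
      simp only [Finset.mem_filter, Finset.mem_univ, true_and] at this
      exact absurd this.1 (not_le_of_gt hij)
  have hLF_lb : ∀ i : Fin n, C (L i) + 1 ≤ LF i := by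
    intro i; rw [hLF]; exact Nat.add_le_add_left (hrank_pos i) _
  have hLF_ub : ∀ i : Fin n, LF i ≤ C ((L i : ℕ) + 1) := by
    intro i; rw [hLF, hCsucc]; exact Nat.add_le_add_left (hrank_le _ _) _
  -- key strict comparison
  have key : ∀ i j : Fin n, (L i < L j ∨ (L i = L j ∧ i < j)) → LF i < LF j := by
    intro i j h
    rcases h with h | ⟨heq, hij⟩
    · calc LF i ≤ C ((L i : ℕ) + 1) := hLF_ub i
        _ ≤ C (L j) := hCmono _ _ (by exact_mod_cast h)
        _ < LF j := lt_of_lt_of_le (Nat.lt_succ_self _) (hLF_lb j)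
    · rw [hLF, hLF, ← heq]
      exact Nat.add_lt_add_left (hrank_lt (L i) i j hij heq.symm) _
  have hInj : Function.Injective LF := by
    intro i j h
    by_contra hne
    rcases lt_trichotomy (L i) (L j) with hl | hl | hl
    · exact absurd h (ne_of_lt (key i j (Or.inl hl)))
    · rcases lt_trichotomy i j with hij | hij | hij
      · exact absurd h (ne_of_lt (key i j (Or.inr ⟨hl, hij⟩)))
      · exact hne hij
      · exact absurd h.symm (ne_of_lt (key j i (Or.inr ⟨hl.symm, hij⟩)))
    · exact absurd h.symm (ne_of_lt (key j i (Or.inl hl)))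
  -- ncard of an Icc in ℕ
  have hIccCard : ∀ a b : ℕ, (Set.Icc a b).ncard = b + 1 - a := by
    intro a b
    rw [← Finset.coe_Icc, Set.ncard_coe_finset, Nat.card_Icc]
  -- generic bijection lemma
  have hBij : ∀ (s : Set (Fin n)) (a b : ℕ),
      Set.MapsTo LF s (Set.Icc a b) → s.ncard = b + 1 - a → Set.BijOn LF s (Set.Icc a b) := by
    intro s a b hmap hcard
    have hinj : Set.InjOn LF s := hInj.injOn
    refine ⟨hmap, hinj, ?_⟩
    have himg : LF '' s = Set.Icc a b := by
      apply Set.eq_of_subset_of_ncard_le (Set.image_subset_iff.mpr hmap)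
      rw [Set.ncard_image_of_injOn hinj, hIccCard, hcard]
    rw [← himg]
    exact Set.Subset.refl _
  constructor
  · apply hBij
    · intro i _
      refine ⟨hLF_lb i |>.trans' (by omega), le_trans (hLF_ub i) (hCn _)⟩
    · rw [Set.ncard_univ]
      simp
  · intro c
    refine ⟨?_, fun i j hi hj hij => key i j (Or.inr ⟨hi.trans hj.symm, hij⟩)⟩
    have hset : {i : Fin n | L i = c}.ncard = (univ.filter (fun j => L j = c)).card := by
      rw [Set.ncard_eq_toFinset_card']
      congr 1
      ext i
      simp
    apply hBij
    · intro i hi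
      simp only [Set.mem_setOf_eq] at hi
      constructor
      · have := hLF_lb i; rwa [hi] at this
      · have := hLF_ub i; rwa [hi] at this
    · rw [hset]
      have h1 := hCsucc c
      omega
end

section
/- Distinct-symbol enumeration bound: in a perfect binary wavelet tree over alphabet [1..σ] (σ a power of two), the set of internal tree nodes visited by the range-enumeration algorithm on an interval [b..e] — which descends from the root and prunes every child whose mapped interval is empty — consists exactly of the ancestors of the leaves of symbols occurring in L[b..e]; hence the number of visited nodes is at most d·log₂σ + 1, where d is the number of distinct symbols in L[b..e]. -/
/-- The slice `S[b..e]` of a string (1-based, inclusive). -/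
def strSlice {α : Type*} (S : List α) (b e : ℕ) : List α := (S.take e).drop (b - 1)

/-- The set of nodes of a perfect binary wavelet tree visited by the
range-enumeration algorithm. Nodes are identified with the bit-path from the
root (leaves are the symbols, encoded as bit-strings of length `m = log₂ σ`);
`occ` is the set of symbols occurring in the queried range `L[b..e]`. The
algorithm starts at the root and descends to a child iff its mapped interval
is nonempty, i.e., iff some symbol of `occ` lies below that child (has the
child's bit-path as a prefix). -/
inductive WTVisited (occ : Set (List Bool)) : List Bool → Prop
  | root : WTVisited occ []
  | child (v : List Bool) (b : Bool) : WTVisited occ v →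
      (∃ c ∈ occ, (v ++ [b]) <+: c) → WTVisited occ (v ++ [b])

private lemma wt_visit_of_prefix {occ : Set (List Bool)} {c : List Bool}
    (hc : c ∈ occ) : ∀ v : List Bool, v <+: c → WTVisited occ v := by
  intro v
  induction v using List.reverseRecOn with
  | nil => intro _; exact WTVisited.root
  | append_singleton vs b ih =>
    intro hpre
    exact WTVisited.child vs b (ih ((vs.prefix_append [b]).trans hpre)) ⟨c, hc, hpre⟩

/-- distinct-symbol enumeration bound. In a perfect binary
wavelet tree over the alphabet `[1..σ]` with `σ = 2^m` (symbols = bit-strings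
of length `m`), for the range-enumeration algorithm on an interval `[b..e]` of
the string `L`: the set of internal nodes visited consists exactly of the
ancestors (prefixes, including the node itself) of the leaves of the symbols
occurring in `L[b..e]`; hence the number of visited internal nodes is at most
`d·log₂σ + 1`, where `d` is the number of distinct symbols in `L[b..e]`. -/
theorem wavelet_enumeration_bound (m : ℕ) (L : List (List Bool))
    (hlen : ∀ c ∈ L, c.length = m) (b e : ℕ)
    (occ : Set (List Bool)) (hocc : occ = {c | c ∈ strSlice L b e}) :
    (occ.Nonempty →
      {v | WTVisited occ v ∧ v.length < m} =
        {v | v.length < m ∧ ∃ c ∈ occ, v <+: c}) ∧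
    {v | WTVisited occ v ∧ v.length < m}.ncard ≤ occ.ncard * m + 1 := by
  have hfin : occ = ↑(strSlice L b e).toFinset := by
    rw [hocc]; ext c; simp
  constructor
  · rintro ⟨c0, hc0⟩
    ext v
    simp only [Set.mem_setOf_eq]
    constructor
    · rintro ⟨hv, hlt⟩
      refine ⟨hlt, ?_⟩
      cases hv with
      | root => exact ⟨c0, hc0, List.nil_prefix⟩
      | child v b _ h => exact h
    · rintro ⟨hlt, c, hc, hpre⟩
      exact ⟨wt_visit_of_prefix hc v hpre, hlt⟩
  · set F : Finset (List Bool) :=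
      (strSlice L b e).toFinset.biUnion (fun c => (Finset.range m).image c.take) with hF
    have hsub : {v | WTVisited occ v ∧ v.length < m} ⊆ insert [] ↑F := by
      rintro v ⟨hv, hlt⟩
      cases hv with
      | root => exact Set.mem_insert _ _
      | child w b hw hex =>
        obtain ⟨c, hc, hpre⟩ := hex
        refine Set.mem_insert_of_mem _ ?_
        simp only [hF, Finset.coe_biUnion, Set.mem_iUnion, Finset.mem_coe,
          Finset.mem_image, Finset.mem_range, List.mem_toFinset]
        refine ⟨c, ?_, (w ++ [b]).length, hlt, ?_⟩
        · rw [hfin] at hc; simpa using hc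
        · exact (List.prefix_iff_eq_take.mp hpre).symm
    have h1 : {v | WTVisited occ v ∧ v.length < m}.ncard ≤
        (insert ([] : List Bool) ↑F : Set _).ncard :=
      Set.ncard_le_ncard hsub ((F.finite_toSet).insert _)
    have h2 : (insert ([] : List Bool) ↑F : Set _).ncard ≤ F.card + 1 := by
      rw [← Set.ncard_coe_finset F]; exact Set.ncard_insert_le _ _
    have h3 : F.card ≤ (strSlice L b e).toFinset.card * m := by
      calc F.card ≤ ∑ c ∈ (strSlice L b e).toFinset, ((Finset.range m).image c.take).card :=
        Finset.card_biUnion_le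
      _ ≤ ∑ c ∈ (strSlice L b e).toFinset, m := by
        apply Finset.sum_le_sum
        intro c _
        exact le_trans Finset.card_image_le (by simp)
      _ = _ := by rw [Finset.sum_const, smul_eq_mul]
    have h4 : occ.ncard = (strSlice L b e).toFinset.card := by
      rw [hfin, Set.ncard_coe_finset]
    rw [h4]; omega
end

section
/- Pruned enumeration with state filtering is correct: let each symbol p carry a bitmask B(p) ⊆ Q, extend B to wavelet tree nodes v by B(v) = ⋃ of B(p) over leaves p below v, and fix a query mask D ⊆ Q. The algorithm that traverses the wavelet tree on interval [b..e], pruning any node v with (D ∩ B(v) = ∅) or an empty mapped interval, reaches exactly the leaves of those symbols p that occur in L[b..e] and satisfy D ∩ B(p) ≠ ∅. -/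
/-- The bitmask of a wavelet-tree node `v` (a bit-path from the root):
the union of the masks `B(p)` of the leaves `p` (symbols, i.e., bit-strings of
length `m`) lying below `v`. -/
def Bext {Q : Type*} (m : ℕ) (B : List Bool → Set Q) (v : List Bool) : Set Q :=
  {q | ∃ c : List Bool, c.length = m ∧ v <+: c ∧ q ∈ B c}

/-- The wavelet-tree traversal on the symbols `occ` occurring in the queried
range, pruning every node `v` whose mask does not intersect the query mask `D`
(`D ∩ B(v) = ∅`) or whose mapped interval is empty (no occurring symbol lies
below `v`). `FReach v` holds iff the traversal arrives at node `v` without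
pruning it. -/
inductive FReach {Q : Type*} (m : ℕ) (occ : Set (List Bool))
    (B : List Bool → Set Q) (D : Set Q) : List Bool → Prop
  | root : (D ∩ Bext m B []).Nonempty → (∃ c, c ∈ occ) →
      FReach m occ B D []
  | child (v : List Bool) (b : Bool) : FReach m occ B D v →
      (D ∩ Bext m B (v ++ [b])).Nonempty → (∃ c ∈ occ, (v ++ [b]) <+: c) →
      FReach m occ B D (v ++ [b])

/-- pruned enumeration with state filtering is correct: the
traversal reaches exactly the leaves of those symbols `p` that occur in
`L[b..e]` and satisfy `D ∩ B(p) ≠ ∅`. -/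
theorem filtered_enumeration_correct {Q : Type*} (m : ℕ)
    (L : List (List Bool)) (hlen : ∀ c ∈ L, c.length = m) (b e : ℕ)
    (occ : Set (List Bool)) (hocc : occ = {c | c ∈ strSlice L b e})
    (B : List Bool → Set Q) (D : Set Q) :
    ∀ p : List Bool, p.length = m →
      (FReach m occ B D p ↔ p ∈ occ ∧ (D ∩ B p).Nonempty) := by
  -- every element of occ has length m
  have hoccLen : ∀ c ∈ occ, c.length = m := by
    intro c hc
    rw [hocc] at hc
    exact hlen c (List.mem_of_mem_take (List.mem_of_mem_drop hc))
  -- Bext at a leaf equals B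
  have hleaf : ∀ p : List Bool, p.length = m → Bext m B p = B p := by
    intro p hp
    ext q
    constructor
    · rintro ⟨c, hc, hpre, hq⟩
      rwa [hpre.eq_of_length (hp.trans hc.symm)]
    · intro hq
      exact ⟨p, hp, List.prefix_refl p, hq⟩
  intro p hp
  constructor
  · intro h
    cases h with
    | root h1 h2 =>
      obtain ⟨c, hc⟩ := h2
      have : c = [] := List.length_eq_zero_iff.mp ((hoccLen c hc).trans hp.symm) -- p = [] so m = 0
      refine ⟨this ▸ hc, ?_⟩
      rwa [hleaf [] hp] at h1
    | child v bb _ h1 h2 =>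
      obtain ⟨c, hc, hpre⟩ := h2
      have : c = v ++ [bb] :=
        (hpre.eq_of_length (hp.trans (hoccLen c hc).symm)).symm
      refine ⟨this ▸ hc, ?_⟩
      rwa [hleaf _ hp] at h1
  · rintro ⟨hpocc, hne⟩
    -- Bext of any prefix of p is ⊇ B p
    have hmono : ∀ v, v <+: p → (D ∩ Bext m B v).Nonempty := by
      rintro v hv
      obtain ⟨q, hqD, hqB⟩ := hne
      exact ⟨q, hqD, p, hp, hv, hqB⟩
    have key : ∀ v : List Bool, v <+: p → FReach m occ B D v := by
      intro v
      induction v using List.reverseRecOn with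
      | nil => intro _; exact FReach.root (hmono [] (List.nil_prefix)) ⟨p, hpocc⟩
      | append_singleton v bb ih =>
        intro hv
        have hv' : v <+: p := (List.prefix_append v [bb]).trans hv
        exact FReach.child v bb (ih hv') (hmono _ hv) ⟨p, hpocc, hv⟩
    exact key p (List.prefix_refl p)
end
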